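/- If D is atomic and (D,ρ) regenerate μ at every flaw, then (D,ρ,μ) is harmonic: for every i, every σ ∈ f_i, and every τ ∈ A(i,σ), ρ_i(σ,τ) = μ(τ) / Σ_{σ' ∈ A(i,σ)} μ(σ'). -/

import Mathlib

/-- If the action digraph is atomic and `(D,ρ)` regenerate `μ` at every flaw, then
`(D,ρ,μ)` is harmonic: for every flaw `f i`, every `σ ∈ f i` and `τ ∈ A i σ`,
`ρ i σ τ = μ τ / ∑_{σ' ∈ A i σ} μ σ'`. -/
theorem stmt_2 {Ω ι : Type*} [Fintype Ω] [DecidableEq Ω]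
    (μ : Ω → ℝ) (hμpos : ∀ σ, 0 < μ σ) (hμ1 : ∑ σ, μ σ = 1)
    (f : ι → Finset Ω) (hf : ∀ i, (f i).Nonempty)
    (A : ι → Ω → Finset Ω) (hA : ∀ i, ∀ σ ∈ f i, (A i σ).Nonempty)
    (ρ : ι → Ω → Ω → ℝ)
    (hρ0 : ∀ i σ τ, 0 ≤ ρ i σ τ)
    (hρsupp : ∀ i, ∀ σ ∈ f i, ∀ τ, τ ∉ A i σ → ρ i σ τ = 0)
    (hρsum : ∀ i, ∀ σ ∈ f i, ∑ τ, ρ i σ τ = 1)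
    (hatomic : ∀ i (τ : Ω), ∀ σ ∈ f i, ∀ σ' ∈ f i, τ ∈ A i σ → τ ∈ A i σ' → σ = σ')
    (hregen : ∀ i (τ : Ω), (∑ σ ∈ f i, μ σ * ρ i σ τ) / (∑ σ ∈ f i, μ σ) = μ τ) :
    ∀ i, ∀ σ ∈ f i, ∀ τ ∈ A i σ, ρ i σ τ = μ τ / (∑ σ' ∈ A i σ, μ σ') := by
  intro i σ hσ τ hτ
  set M : ℝ := ∑ σ' ∈ f i, μ σ' with hM
  have hMpos : 0 < M := Finset.sum_pos (fun x _ => hμpos x) (hf i)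
  -- the regeneration sum collapses to a single term for any τ' ∈ A i σ
  have key : ∀ τ' ∈ A i σ, μ σ * ρ i σ τ' = μ τ' * M := by
    intro τ' hτ'
    have hsingle : ∑ σ' ∈ f i, μ σ' * ρ i σ' τ' = μ σ * ρ i σ τ' := by
      refine Finset.sum_eq_single σ ?_ (fun h => absurd hσ h)
      intro σ' hσ' hne
      have : τ' ∉ A i σ' := fun h => hne (hatomic i τ' σ' hσ' σ hσ h hτ')
      rw [hρsupp i σ' hσ' τ' this, mul_zero]
    have := hregen i τ'
    rw [hsingle] at this
    rw [div_eq_iff (show (∑ σ ∈ f i, μ σ) ≠ 0 from hMpos.ne')] at this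
    exact this
  -- summing over A i σ gives μ σ = M * S
  set S : ℝ := ∑ σ' ∈ A i σ, μ σ' with hS
  have hSpos : 0 < S := Finset.sum_pos (fun x _ => hμpos x) (hA i σ hσ)
  have hsumA : ∑ τ' ∈ A i σ, ρ i σ τ' = 1 := by
    rw [Finset.sum_subset (Finset.subset_univ (A i σ))
      (fun x _ hx => hρsupp i σ hσ x hx), hρsum i σ hσ]
  have hμσ : μ σ = S * M := by
    have : ∑ τ' ∈ A i σ, μ σ * ρ i σ τ' = ∑ τ' ∈ A i σ, μ τ' * M :=
      Finset.sum_congr rfl key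
    rw [← Finset.mul_sum, hsumA, mul_one, ← Finset.sum_mul] at this
    exact this
  have h1 := key τ hτ
  rw [hμσ] at h1
  rw [eq_div_iff hSpos.ne']
  exact mul_right_cancel₀ hMpos.ne' (by linear_combination h1)
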